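/- Fix n ≥ 1 and 1 ≤ p ≤ n. Let J_p = {α ∈ Reg(ORCT_n) : |Im α| = p}, let R_η = {α ∈ J_p : α is order-preserving and Im α = {1,…,p}}, and let L_{δ*} = {α ∈ J_p : α is order-reversing and the kernel classes of α are {1}, …, {p−1}, {p,…,n}}. Then the subsemigroup generated by R_η ∪ L_{δ*} contains all of J_p. -/

import Mathlib

/-- `α` is a (full) contraction of the chain `{1, …, n}` (modelled as `Fin n`):
`|xα - yα| ≤ |x - y|` for all `x, y`. -/
def IsContraction {n : ℕ} (α : Function.End (Fin n)) : Prop :=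
  ∀ x y : Fin n, |((α x : ℕ) : ℤ) - ((α y : ℕ) : ℤ)| ≤ |((x : ℕ) : ℤ) - ((y : ℕ) : ℤ)|

/-- `OCT n`: the order-preserving full contractions of the chain. -/
def OCT (n : ℕ) : Set (Function.End (Fin n)) :=
  {α | IsContraction α ∧ Monotone α}

/-- `ORCT n`: the order-preserving or order-reversing full contractions of the chain. -/
def ORCT (n : ℕ) : Set (Function.End (Fin n)) :=
  {α | IsContraction α ∧ (Monotone α ∨ Antitone α)}

/-- The regular elements of `OCT n`. -/
def RegOCT (n : ℕ) : Set (Function.End (Fin n)) :=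
  {α | α ∈ OCT n ∧ ∃ β ∈ OCT n, α * β * α = α}

/-- The regular elements of `ORCT n`. -/
def RegORCT (n : ℕ) : Set (Function.End (Fin n)) :=
  {α | α ∈ ORCT n ∧ ∃ β ∈ ORCT n, α * β * α = α}

/-- `|Im α|`, the rank of a transformation. -/
noncomputable def imCard {n : ℕ} (α : Function.End (Fin n)) : ℕ :=
  (Set.range α).ncard

/-- `J_p`: the elements of `Reg(ORCT_n)` of rank exactly `p`. -/
def Jp (n p : ℕ) : Set (Function.End (Fin n)) :=
  {α | α ∈ RegORCT n ∧ imCard α = p}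

/-- `R_η`: the order-preserving elements of `J_p` whose image is `{1, …, p}`
(i.e. `{0, …, p-1}` in `Fin n`). -/
def RetaJ (n p : ℕ) : Set (Function.End (Fin n)) :=
  {α | α ∈ Jp n p ∧ Monotone α ∧ Set.range α = {x : Fin n | (x : ℕ) < p}}

/-- `L_{δ*}`: the order-reversing elements of `J_p` whose kernel classes are
`{1}, …, {p-1}, {p, …, n}` (in `Fin n`: singletons `{0}, …, {p-2}` together with the
block of indices `≥ p - 1`). -/
def LdeltaStar (n p : ℕ) : Set (Function.End (Fin n)) :=
  {α | α ∈ Jp n p ∧ Antitone α ∧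
    ∀ x y : Fin n, α x = α y ↔ (x = y ∨ (p - 1 ≤ (x : ℕ) ∧ p - 1 ≤ (y : ℕ)))}


section Aux

variable {n p : ℕ}

lemma abs_natCast_sub (a b : ℕ) :
    |((a : ℤ)) - (b : ℤ)| = (((a - b) + (b - a) : ℕ) : ℤ) := by
  rcases le_total a b with h | h
  · rw [abs_sub_comm, abs_of_nonneg (by omega : (0:ℤ) ≤ (b:ℤ) - (a:ℤ))]
    omega
  · rw [abs_of_nonneg (by omega : (0:ℤ) ≤ (a:ℤ) - (b:ℤ))]
    omega

lemma isContraction_iff (α : Function.End (Fin n)) :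
    IsContraction α ↔ ∀ x y : Fin n,
      ((α x : ℕ) - (α y : ℕ)) + ((α y : ℕ) - (α x : ℕ))
        ≤ ((x : ℕ) - (y : ℕ)) + ((y : ℕ) - (x : ℕ)) := by
  unfold IsContraction
  constructor
  · intro h x y
    have := h x y
    rw [abs_natCast_sub, abs_natCast_sub] at this
    omega
  · intro h x y
    have := h x y
    rw [abs_natCast_sub, abs_natCast_sub]
    omega

set_option maxHeartbeats 1600000 in
/-- Classification of monotone regular contractions of rank `p`. -/
lemma mono_classify (hn : 1 ≤ n) (hp1 : 1 ≤ p)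
    (α γ : Function.End (Fin n)) (hC : IsContraction α) (hM : Monotone α)
    (hγ : IsContraction γ) (hreg : ∀ x, α (γ (α x)) = α x)
    (hcard : imCard α = p) :
    ∃ a t : ℕ, a + p ≤ n ∧ t + p ≤ n ∧
      ∀ x : Fin n, (α x : ℕ) = a + min ((x : ℕ) - t) (p - 1) := by
  have hC' := (isContraction_iff α).mp hC
  have hγ' := (isContraction_iff γ).mp hγ
  set bot : Fin n := ⟨0, by omega⟩ with hbot
  set top : Fin n := ⟨n - 1, by omega⟩ with htop
  set a : ℕ := (α bot : ℕ) with ha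
  set b : ℕ := (α top : ℕ) with hb
  have hlo : ∀ x : Fin n, a ≤ (α x : ℕ) := by
    intro x
    exact hM (show bot ≤ x from Fin.mk_le_of_le_val (by omega))
  have hhi : ∀ x : Fin n, (α x : ℕ) ≤ b := by
    intro x
    have : x ≤ top := by
      rw [Fin.le_def]
      have := x.2; simp [htop]; omega
    exact hM this
  have hab : a ≤ b := hlo top
  -- discrete intermediate value property
  have hsurj : ∀ k : ℕ, a ≤ k → k ≤ b → ∃ x : Fin n, (α x : ℕ) = k := by
    intro k hk1 hk2
    classical
    have hFne : (Finset.univ.filter (fun x : Fin n => (α x : ℕ) ≤ k)).Nonempty :=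
      ⟨bot, Finset.mem_filter.mpr ⟨Finset.mem_univ _, by omega⟩⟩
    obtain ⟨x0, hx0mem, hx0max⟩ := Finset.exists_max_image
      (Finset.univ.filter (fun x : Fin n => (α x : ℕ) ≤ k)) id hFne
    have hx0 : (α x0 : ℕ) ≤ k := (Finset.mem_filter.mp hx0mem).2
    by_cases hxt : (x0 : ℕ) = n - 1
    · have hxt' : x0 = top := Fin.ext (by simp [htop, hxt])
      rw [hxt'] at hx0
      exact ⟨top, by omega⟩
    · have hlt : (x0 : ℕ) + 1 < n := by have := x0.2; omega
      have hyk : ¬ ((α ⟨(x0 : ℕ) + 1, hlt⟩ : ℕ) ≤ k) := by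
        intro hcon
        have hmem : (⟨(x0 : ℕ) + 1, hlt⟩ : Fin n)
            ∈ Finset.univ.filter (fun x : Fin n => (α x : ℕ) ≤ k) :=
          Finset.mem_filter.mpr ⟨Finset.mem_univ _, hcon⟩
        have := hx0max _ hmem
        simp only [id, Fin.le_def] at this
        omega
      have hstep := hC' (⟨(x0 : ℕ) + 1, hlt⟩ : Fin n) x0
      simp only [Fin.val_mk] at hstep
      exact ⟨x0, by omega⟩
  -- the range is an interval
  have hrange : Set.range α = ↑(Finset.Icc (α bot) (α top)) := by
    ext v
    simp only [Set.mem_range, Finset.coe_Icc, Set.mem_Icc]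
    constructor
    · rintro ⟨x, rfl⟩
      constructor
      · exact hM (show bot ≤ x from Fin.mk_le_of_le_val (by omega))
      · refine hM ?_
        rw [Fin.le_def]
        have := x.2; simp [htop]; omega
    · rintro ⟨h1, h2⟩
      rw [Fin.le_def] at h1 h2
      obtain ⟨x, hx⟩ := hsurj (v : ℕ) h1 h2
      exact ⟨x, Fin.ext hx⟩
  have hcard' : b + 1 - a = p := by
    rw [imCard, hrange, Set.ncard_coe_finset, Fin.card_Icc] at hcard
    exact hcard
  have hbval : b = a + p - 1 := by omega
  have hbn : b ≤ n - 1 := by have := (α top).2; omega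
  have hapn : a + p ≤ n := by omega
  -- the points `V i = a + i` of the image, for `i ≤ p - 1`
  have hVlt : ∀ i : ℕ, i ≤ p - 1 → a + i < n := by intro i hi; omega
  set V : ℕ → Fin n := fun i => ⟨min (a + i) (n - 1), by omega⟩ with hV
  have hVval : ∀ i : ℕ, i ≤ p - 1 → ((V i : ℕ)) = a + i := by
    intro i hi
    simp only [hV]
    omega
  set w : ℕ → ℕ := fun i => (γ (V i) : ℕ) with hw
  have hαw : ∀ i : ℕ, i ≤ p - 1 → (α (γ (V i)) : ℕ) = a + i := by
    intro i hi
    obtain ⟨x, hx⟩ := hsurj (a + i) (by omega) (by omega)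
    have hVi : V i = α x := Fin.ext (by rw [hVval i hi, hx])
    rw [hVi, hreg x, hx]
  have hwsucc : ∀ i : ℕ, i + 1 ≤ p - 1 → w (i + 1) = w i + 1 := by
    intro i hi
    have h1 := hαw i (by omega)
    have h2 := hαw (i + 1) hi
    have hgt : w i < w (i + 1) := by
      by_contra hcon
      push_neg at hcon
      have hle : γ (V (i+1)) ≤ γ (V i) := by rw [Fin.le_def]; exact hcon
      have := hM hle
      rw [Fin.le_def, h1, h2] at this
      omega
    have hc := hγ' (V (i + 1)) (V i)
    rw [hVval (i+1) hi, hVval i (by omega)] at hc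
    simp only [hw] at hgt ⊢
    omega
  have hwlin : ∀ i : ℕ, i ≤ p - 1 → w i = w 0 + i := by
    intro i
    induction i with
    | zero => intro _; omega
    | succ j ih =>
      intro hj
      rw [hwsucc j hj, ih (by omega)]
      omega
  set t : ℕ := w 0 with htdef
  have htn : t + (p - 1) ≤ n - 1 := by
    have h1 := hwlin (p - 1) le_rfl
    have h2 : w (p - 1) < n := (γ (V (p - 1))).2
    omega
  refine ⟨a, t, hapn, by omega, ?_⟩
  intro x
  by_cases h1 : (x : ℕ) ≤ t
  · have hle : x ≤ γ (V 0) := by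
      rw [Fin.le_def]
      exact le_trans h1 (le_of_eq rfl)
    have := hM hle
    rw [Fin.le_def, hαw 0 (by omega)] at this
    have := hlo x
    omega
  · by_cases h2 : (x : ℕ) < t + (p - 1)
    · set i : ℕ := (x : ℕ) - t with hi
      have hip : i ≤ p - 1 := by omega
      have hxV : x = γ (V i) := by
        apply Fin.ext
        rw [show ((γ (V i) : ℕ)) = w i from rfl, hwlin i hip]
        omega
      have := hαw i hip
      rw [← hxV] at this
      omega
    · have hge : γ (V (p - 1)) ≤ x := by
        rw [Fin.le_def, show ((γ (V (p-1)) : ℕ)) = w (p-1) from rfl, hwlin (p-1) le_rfl]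
        omega
      have := hM hge
      rw [Fin.le_def, hαw (p - 1) le_rfl] at this
      have := hhi x
      omega

/-- The generator `η_t : x ↦ min (x - t) (p - 1)`. -/
def etaF (n p t : ℕ) : Function.End (Fin n) := fun x =>
  ⟨min ((x : ℕ) - t) (p - 1),
    Nat.lt_of_le_of_lt (le_trans (Nat.min_le_left _ _) (Nat.sub_le _ _)) x.2⟩

/-- The generator `δ_c : x ↦ c - min x (p - 1)`. -/
def deltaF (n p c : ℕ) (hc : c < n) : Function.End (Fin n) := fun x =>
  ⟨c - min (x : ℕ) (p - 1), Nat.lt_of_le_of_lt (Nat.sub_le _ _) hc⟩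

lemma etaF_mem (hp1 : 1 ≤ p) (t : ℕ) (ht : t + p ≤ n) : etaF n p t ∈ RetaJ n p := by
  have hn : 1 ≤ n := by omega
  have hCe : IsContraction (etaF n p t) := by
    rw [isContraction_iff]
    intro x y
    simp only [etaF]
    omega
  have hMe : Monotone (etaF n p t) := by
    intro x y hxy
    rw [Fin.le_def] at hxy ⊢
    simp only [etaF]
    omega
  have hrange : Set.range (etaF n p t) = {x : Fin n | (x : ℕ) < p} := by
    ext v
    simp only [Set.mem_range, Set.mem_setOf_eq]
    constructor
    · rintro ⟨x, rfl⟩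
      simp only [etaF]
      omega
    · intro hv
      refine ⟨⟨(v : ℕ) + t, by omega⟩, Fin.ext ?_⟩
      simp only [etaF]
      omega
  refine ⟨⟨⟨⟨hCe, Or.inl hMe⟩, ?_⟩, ?_⟩, hMe, hrange⟩
  · -- regularity
    refine ⟨fun y => ⟨min ((y : ℕ) + t) (n - 1), by omega⟩, ⟨?_, Or.inl ?_⟩, ?_⟩
    · refine (isContraction_iff _).mpr ?_
      intro x y
      simp only [Fin.val_mk]
      omega
    · intro x y hxy
      rw [Fin.le_def] at hxy ⊢
      simp only [Fin.val_mk]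
      omega
    · funext x
      show etaF n p t ⟨min (((etaF n p t x : ℕ)) + t) (n - 1), _⟩ = etaF n p t x
      apply Fin.ext
      simp only [etaF]
      have := x.2
      omega
  · -- rank
    rw [imCard, hrange]
    have heq : {x : Fin n | (x : ℕ) < p} = ↑(Finset.Iic (⟨p - 1, by omega⟩ : Fin n)) := by
      ext v
      simp only [Finset.coe_Iic, Set.mem_Iic, Set.mem_setOf_eq, Fin.le_def, Fin.val_mk]
      omega
    rw [heq, Set.ncard_coe_finset, Fin.card_Iic]
    simp only [Fin.val_mk]
    omega

lemma deltaF_mem (hp1 : 1 ≤ p) (c : ℕ) (hc1 : p - 1 ≤ c) (hc : c < n) :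
    deltaF n p c hc ∈ LdeltaStar n p := by
  have hCd : IsContraction (deltaF n p c hc) := by
    rw [isContraction_iff]
    intro x y
    simp only [deltaF]
    omega
  have hAd : Antitone (deltaF n p c hc) := by
    intro x y hxy
    rw [Fin.le_def] at hxy ⊢
    simp only [deltaF]
    omega
  have hrange : Set.range (deltaF n p c hc)
      = ↑(Finset.Icc (⟨c - (p - 1), by omega⟩ : Fin n) ⟨c, hc⟩) := by
    ext v
    simp only [Set.mem_range, Finset.coe_Icc, Set.mem_Icc, Fin.le_def, Fin.val_mk]
    constructor
    · rintro ⟨x, rfl⟩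
      simp only [deltaF]
      constructor <;> omega
    · rintro ⟨h1, h2⟩
      refine ⟨⟨c - (v : ℕ), by omega⟩, Fin.ext ?_⟩
      simp only [deltaF]
      omega
  refine ⟨⟨⟨⟨hCd, Or.inr hAd⟩, ?_⟩, ?_⟩, hAd, ?_⟩
  · -- regularity
    refine ⟨fun y => ⟨c - (y : ℕ), by omega⟩, ⟨?_, Or.inr ?_⟩, ?_⟩
    · refine (isContraction_iff _).mpr ?_
      intro x y
      simp only [Fin.val_mk]
      omega
    · intro x y hxy
      rw [Fin.le_def] at hxy ⊢
      simp only [Fin.val_mk]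
      omega
    · funext x
      show deltaF n p c hc ⟨c - ((deltaF n p c hc x : ℕ)), _⟩ = deltaF n p c hc x
      apply Fin.ext
      simp only [deltaF]
      omega
  · rw [imCard, hrange, Set.ncard_coe_finset, Fin.card_Icc]
    simp only [Fin.val_mk]
    omega
  · intro x y
    rw [Fin.ext_iff, Fin.ext_iff]
    simp only [deltaF]
    omega

/-- The order-reversing permutation. -/
def rhoF (n : ℕ) : Function.End (Fin n) := fun x =>
  ⟨n - 1 - (x : ℕ), by have := x.2; omega⟩

end Aux

/-- `J_p` is contained in the subsemigroup generated by `R_η ∪ L_{δ*}`. -/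
theorem stmt_13 (n p : ℕ) (hn : 1 ≤ n) (hp1 : 1 ≤ p) (hpn : p ≤ n) :
    Jp n p ⊆
      (Subsemigroup.closure (RetaJ n p ∪ LdeltaStar n p) : Set (Function.End (Fin n))) := by
  intro α hα
  obtain ⟨⟨⟨hC, hMA⟩, β, ⟨hβC, hβMA⟩, hβ⟩, hcard⟩ := hα
  have hreg : ∀ x, α (β (α x)) = α x := fun x => congrFun hβ x
  rcases hMA with hM | hA
  · -- monotone case : α = δ_{a+p-1} ∘ δ_{p-1} ∘ η_t
    obtain ⟨a, t, ha, ht, hform⟩ := mono_classify hn hp1 α β hC hM hβC hreg hcard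
    have hc1 : a + p - 1 < n := by omega
    have hc2 : p - 1 < n := by omega
    have hfact : α = deltaF n p (a + p - 1) hc1 * (deltaF n p (p - 1) hc2 * etaF n p t) := by
      funext x
      show α x = deltaF n p (a + p - 1) hc1 (deltaF n p (p - 1) hc2 (etaF n p t x))
      apply Fin.ext
      rw [hform x]
      simp only [deltaF, etaF]
      omega
    rw [hfact]
    refine Subsemigroup.mul_mem _ ?_ (Subsemigroup.mul_mem _ ?_ ?_)
    · exact Subsemigroup.subset_closure (Or.inr (deltaF_mem hp1 _ (by omega) hc1))
    · exact Subsemigroup.subset_closure (Or.inr (deltaF_mem hp1 _ (by omega) hc2))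
    · exact Subsemigroup.subset_closure (Or.inl (etaF_mem hp1 t ht))
  · -- antitone case : reduce to the monotone case via the reversal ρ
    have hρρ : ∀ z : Fin n, rhoF n (rhoF n z) = z := by
      intro z
      apply Fin.ext
      simp only [rhoF, Fin.val_mk]
      have := z.2
      omega
    set α' : Function.End (Fin n) := fun x => rhoF n (α x) with hα'
    have hC'' : IsContraction α' := by
      rw [isContraction_iff] at *
      intro x y
      have h1 := hC x y
      have h2 := (α x).2
      have h3 := (α y).2
      simp only [hα', rhoF, Fin.val_mk]
      omega
    have hM'' : Monotone α' := by
      intro x y hxy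
      have := hA hxy
      rw [Fin.le_def] at this ⊢
      have h2 := (α x).2
      simp only [hα', rhoF, Fin.val_mk]
      omega
    set γ' : Function.End (Fin n) := fun y => β (rhoF n y) with hγ'
    have hγC : IsContraction γ' := by
      rw [isContraction_iff] at *
      intro x y
      have h1 := hβC (rhoF n x) (rhoF n y)
      have h2 := x.2
      have h3 := y.2
      simp only [hγ'] at *
      simp only [rhoF, Fin.val_mk] at h1 ⊢
      omega
    have hreg' : ∀ x, α' (γ' (α' x)) = α' x := by
      intro x
      show rhoF n (α (β (rhoF n (rhoF n (α x))))) = rhoF n (α x)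
      rw [hρρ, hreg]
    have hinj : Function.Injective (rhoF n) := by
      intro u v huv
      have h1 := u.2
      have h2 := v.2
      apply Fin.ext
      have := Fin.ext_iff.mp huv
      simp only [rhoF, Fin.val_mk] at this
      omega
    have hcard' : imCard α' = p := by
      rw [imCard, show Set.range α' = rhoF n '' Set.range α from by
        ext v; simp [hα', Set.mem_image, Set.mem_range]
        exact ⟨fun ⟨y, hy⟩ => ⟨α y, ⟨y, rfl⟩, hy⟩, fun ⟨_, ⟨y, rfl⟩, hy⟩ => ⟨y, hy⟩⟩]
      rw [Set.ncard_image_of_injective _ hinj]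
      exact hcard
    obtain ⟨a, t, ha, ht, hform⟩ := mono_classify hn hp1 α' γ' hC'' hM'' hγC hreg' hcard'
    have hc1 : n - 1 - a < n := by omega
    have hfact : α = deltaF n p (n - 1 - a) hc1 * etaF n p t := by
      funext x
      show α x = deltaF n p (n - 1 - a) hc1 (etaF n p t x)
      apply Fin.ext
      have h1 := hform x
      have h2 : (α' x : ℕ) = n - 1 - (α x : ℕ) := rfl
      have h3 := (α x).2
      simp only [deltaF, etaF]
      omega
    rw [hfact]
    refine Subsemigroup.mul_mem _ ?_ ?_
    · exact Subsemigroup.subset_closure (Or.inr (deltaF_mem hp1 _ (by omega) hc1))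
    · exact Subsemigroup.subset_closure (Or.inl (etaF_mem hp1 t ht))
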